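/- In the quantum exterior algebra Λ, the Q-weight-zero homogeneous component of the degree-2 part Λ² is three-dimensional, spanned by f_{α₁}e_{α₁}, f_{α₂}e_{α₂}, and f_{α₁+α₂}e_{α₁+α₂}. (This computes the space of left O_q(SU₃)-coinvariant 2-forms of Ω²_q(F₃).) -/

import Mathlib

noncomputable section

namespace QFlagExt

/-- The positive roots of `sl₃`: `a1 = α₁`, `a2 = α₂`, `a12 = α₁+α₂`. -/
inductive PosRoot : Type
  | a1 | a2 | a12
deriving DecidableEq

instance : Fintype PosRoot := ⟨{PosRoot.a1, PosRoot.a2, PosRoot.a12}, fun x => by cases x <;> simp⟩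

open PosRoot

/-- Position in the convex order `α₂ < α₁+α₂ < α₁`. -/
def pos : PosRoot → ℕ
  | a2 => 0
  | a12 => 1
  | a1 => 2

/-- The symmetric bilinear form `(·,·)` on the roots of `sl₃`. -/
def ip : PosRoot → PosRoot → ℤ
  | a1, a1 => 2
  | a2, a2 => 2
  | a12, a12 => 2
  | a1, a2 => -1
  | a2, a1 => -1
  | a1, a12 => 1
  | a12, a1 => 1
  | a2, a12 => 1
  | a12, a2 => 1

/-- Generators of the quantum exterior algebra: `e γ` and `f γ` for `γ ∈ Δ⁺`. -/
inductive LGen : Type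
  | e : PosRoot → LGen
  | f : PosRoot → LGen
deriving DecidableEq, Fintype

open LGen

/-- The generators viewed inside the free algebra. -/
def ce (x : LGen) : FreeAlgebra ℂ LGen := FreeAlgebra.ι ℂ x

/-- The defining relations of the quantum exterior algebra `Λ` of the full quantum
flag manifold of `O_q(SU₃)`. -/
inductive lrel (q : ℝ) : FreeAlgebra ℂ LGen → FreeAlgebra ℂ LGen → Prop
  | ee (β γ : PosRoot) (h : pos β ≤ pos γ) :
      lrel q (ce (e γ) * ce (e β)) ((-((q : ℂ) ^ ip β γ)) • (ce (e β) * ce (e γ)))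
  | ff (β γ : PosRoot) (h : pos β ≤ pos γ) :
      lrel q (ce (f γ) * ce (f β)) ((-((q : ℂ) ^ (-ip β γ))) • (ce (f β) * ce (f γ)))
  | ef (β γ : PosRoot) (h : β ≠ γ ∨ (β = a12 ∧ γ = a12)) :
      lrel q (ce (e γ) * ce (f β)) ((-((q : ℂ) ^ ip β γ)) • (ce (f β) * ce (e γ)))
  | ef1 :
      lrel q (ce (e a1) * ce (f a1))
        ((-((q : ℂ) ^ (2 : ℤ))) • (ce (f a1) * ce (e a1))
          - ((q : ℂ) - (q : ℂ)⁻¹) • (ce (f a12) * ce (e a12)))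
  | ef2 :
      lrel q (ce (e a2) * ce (f a2))
        ((-((q : ℂ) ^ (2 : ℤ))) • (ce (f a2) * ce (e a2))
          + ((q : ℂ) - (q : ℂ)⁻¹) • (ce (f a12) * ce (e a12)))

/-- The quantum exterior algebra `Λ`. -/
abbrev Lam (q : ℝ) := RingQuot (lrel q)

/-- The generators of `Λ`. -/
def gen (q : ℝ) (x : LGen) : Lam q := RingQuot.mkAlgHom ℂ (lrel q) (ce x)

/-- The positive roots listed in the convex order. -/
def rootList : List PosRoot := [a2, a12, a1]

/-- The ordered monomial `e_{γ₁}⋯e_{γ_a}` over the roots in `s`, in increasing convex order. -/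
def emon (q : ℝ) (s : Finset PosRoot) : Lam q :=
  ((rootList.filter fun γ => decide (γ ∈ s)).map fun γ => gen q (e γ)).prod

/-- The ordered monomial `f_{δ₁}⋯f_{δ_b}` over the roots in `s`, in increasing convex order. -/
def fmon (q : ℝ) (s : Finset PosRoot) : Lam q :=
  ((rootList.filter fun γ => decide (γ ∈ s)).map fun γ => gen q (f γ)).prod

/-- The PBW monomial `f_{δ₁}⋯f_{δ_b} e_{γ₁}⋯e_{γ_a}`. -/
def mon (q : ℝ) (p : Finset PosRoot × Finset PosRoot) : Lam q :=
  fmon q p.1 * emon q p.2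

end QFlagExt

namespace QFlagExt

open PosRoot LGen

/-- Coordinates of a positive root in the root lattice `Q = ℤα₁ ⊕ ℤα₂ ≅ ℤ × ℤ`. -/
def coords : PosRoot → ℤ × ℤ
  | a1 => (1, 0)
  | a2 => (0, 1)
  | a12 => (1, 1)

/-- The `Q`-weight of a generator: `e γ` has weight `γ` and `f γ` has weight `−γ`. -/
def wt : LGen → ℤ × ℤ
  | e γ => coords γ
  | f γ => -coords γ

/-- The `Q`-weight-zero homogeneous component of the degree-2 part `Λ²`: the span of
all weight-zero products of two generators. -/
def wtZeroDeg2 (q : ℝ) : Submodule ℂ (Lam q) :=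
  Submodule.span ℂ {x | ∃ g h : LGen, wt g + wt h = 0 ∧ x = gen q g * gen q h}


/-! ### A 16-dimensional representation of `Λ`, used to prove linear independence -/

/-- Basis labels for a truncated left regular representation of `Λ`. -/
inductive Bas : Type
  | one : Bas
  | g : LGen → Bas
  | fe : PosRoot → PosRoot → Bas
deriving DecidableEq, Fintype

/-- The representation space. -/
abbrev W : Type := Bas → ℂ

/-- The standard basis of `W`. -/
def bw : Module.Basis Bas ℂ W := Pi.basisFun ℂ Bas

/-- Normal form of `e_γ f_β` in the representation. -/
def efW (q : ℝ) : PosRoot → PosRoot → W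
  | a1, a1 => (-((q : ℂ) ^ (2 : ℤ))) • bw (.fe a1 a1)
      - ((q : ℂ) - (q : ℂ)⁻¹) • bw (.fe a12 a12)
  | a2, a2 => (-((q : ℂ) ^ (2 : ℤ))) • bw (.fe a2 a2)
      + ((q : ℂ) - (q : ℂ)⁻¹) • bw (.fe a12 a12)
  | β, γ => (-((q : ℂ) ^ ip β γ)) • bw (.fe β γ)

/-- Action of the generators on basis vectors. -/
def actFun (q : ℝ) : LGen → Bas → W
  | e γ, .one => bw (.g (e γ))
  | e γ, .g (f β) => efW q β γ
  | e _, .g (e _) => 0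
  | e _, .fe _ _ => 0
  | f β, .one => bw (.g (f β))
  | f β, .g (e γ) => bw (.fe β γ)
  | f _, .g (f _) => 0
  | f _, .fe _ _ => 0

/-- Action of the generators on `W`. -/
def act (q : ℝ) (x : LGen) : W →ₗ[ℂ] W := bw.constr ℂ (actFun q x)

@[simp] lemma act_basis (q : ℝ) (x : LGen) (b : Bas) :
    act q x (bw b) = actFun q x b := by
  simp [act, Module.Basis.constr_basis]

@[simp] lemma act_e_efW (q : ℝ) (γ' β γ : PosRoot) :
    act q (e γ') (efW q β γ) = 0 := by
  cases β <;> cases γ <;>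
    simp [efW, map_smul, map_sub, map_add, actFun, smul_zero]

@[simp] lemma act_f_efW (q : ℝ) (γ' β γ : PosRoot) :
    act q (f γ') (efW q β γ) = 0 := by
  cases β <;> cases γ <;>
    simp [efW, map_smul, map_sub, map_add, actFun, smul_zero]

/-- The representation of the free algebra. -/
def phi (q : ℝ) : FreeAlgebra ℂ LGen →ₐ[ℂ] Module.End ℂ W :=
  FreeAlgebra.lift ℂ (act q)

lemma phi_rel (q : ℝ) : ∀ ⦃x y⦄, lrel q x y → phi q x = phi q y := by
  rintro x y (⟨β, γ, h⟩ | ⟨β, γ, h⟩ | ⟨β, γ, h⟩ | _ | _) <;>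
    simp only [map_mul, map_smul, map_sub, map_add, ce, phi, FreeAlgebra.lift_ι_apply] <;>
    refine Module.Basis.ext bw fun b => ?_
  · rcases b with _ | (δ | δ) | ⟨β', γ'⟩ <;>
      simp [Module.End.mul_apply, LinearMap.smul_apply, actFun]
  · rcases b with _ | (δ | δ) | ⟨β', γ'⟩ <;>
      simp [Module.End.mul_apply, LinearMap.smul_apply, actFun]
  · rcases b with _ | (δ | δ) | ⟨β', γ'⟩ <;>
      simp [Module.End.mul_apply, LinearMap.smul_apply, actFun]
    rcases h with h | ⟨rfl, rfl⟩
    · cases β <;> cases γ <;> simp_all [efW, ip]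
    · simp [efW, ip]
  · rcases b with _ | (δ | δ) | ⟨β', γ'⟩ <;>
      simp [Module.End.mul_apply, LinearMap.sub_apply, LinearMap.smul_apply, actFun] <;>
      simp [efW, ip]
  · rcases b with _ | (δ | δ) | ⟨β', γ'⟩ <;>
      simp [Module.End.mul_apply, LinearMap.add_apply, LinearMap.smul_apply, actFun] <;>
      simp [efW, ip]

/-- The representation of `Λ`. -/
def psi (q : ℝ) : Lam q →ₐ[ℂ] Module.End ℂ W :=
  RingQuot.liftAlgHom ℂ ⟨phi q, phi_rel q⟩

@[simp] lemma psi_gen (q : ℝ) (x : LGen) : psi q (gen q x) = act q x := by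
  simp [psi, gen, RingQuot.liftAlgHom_mkAlgHom_apply, phi, ce, FreeAlgebra.lift_ι_apply]

/-- Evaluation of the representation at the cyclic vector. -/
def evalOne (q : ℝ) : Lam q →ₗ[ℂ] W where
  toFun x := psi q x (bw .one)
  map_add' x y := by simp [map_add, LinearMap.add_apply]
  map_smul' c x := by simp [map_smul, LinearMap.smul_apply]

@[simp] lemma evalOne_fe (q : ℝ) (γ : PosRoot) :
    evalOne q (gen q (f γ) * gen q (e γ)) = bw (.fe γ γ) := by
  simp [evalOne, map_mul, Module.End.mul_apply, actFun]

/-- Rewriting `e_γ f_β` into normal form inside `Λ`. -/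
lemma gen_ef (q : ℝ) (β γ : PosRoot) (h : β ≠ γ ∨ (β = a12 ∧ γ = a12)) :
    gen q (e γ) * gen q (f β)
      = (-((q : ℂ) ^ ip β γ)) • (gen q (f β) * gen q (e γ)) := by
  simp only [gen, ← map_mul, ← map_smul]
  exact RingQuot.mkAlgHom_rel ℂ (lrel.ef β γ h)

lemma gen_ef1 (q : ℝ) :
    gen q (e a1) * gen q (f a1)
      = (-((q : ℂ) ^ (2 : ℤ))) • (gen q (f a1) * gen q (e a1))
        - ((q : ℂ) - (q : ℂ)⁻¹) • (gen q (f a12) * gen q (e a12)) := by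
  have := RingQuot.mkAlgHom_rel ℂ (lrel.ef1 (q := q))
  simpa only [gen, map_mul, map_smul, map_sub] using this

lemma gen_ef2 (q : ℝ) :
    gen q (e a2) * gen q (f a2)
      = (-((q : ℂ) ^ (2 : ℤ))) • (gen q (f a2) * gen q (e a2))
        + ((q : ℂ) - (q : ℂ)⁻¹) • (gen q (f a12) * gen q (e a12)) := by
  have := RingQuot.mkAlgHom_rel ℂ (lrel.ef2 (q := q))
  simpa only [gen, map_mul, map_smul, map_add] using this

theorem weight_zero_two_forms (q : ℝ) (hq0 : 0 < q) (hq1 : q < 1) :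
    wtZeroDeg2 q =
      Submodule.span ℂ {gen q (f a1) * gen q (e a1),
        gen q (f a2) * gen q (e a2), gen q (f a12) * gen q (e a12)}
    ∧ Module.finrank ℂ (wtZeroDeg2 q) = 3 := by
  have hspan : wtZeroDeg2 q =
      Submodule.span ℂ {gen q (f a1) * gen q (e a1),
        gen q (f a2) * gen q (e a2), gen q (f a12) * gen q (e a12)} := by
    apply le_antisymm
    · apply Submodule.span_le.2
      rintro x ⟨g, h, hw, rfl⟩
      rcases g with γ | γ <;> rcases h with δ | δ <;> rcases γ <;> rcases δ <;>
        first
        | exact absurd hw (by decide)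
        | (rw [gen_ef q a12 a12 (Or.inr ⟨rfl, rfl⟩)]
           exact Submodule.smul_mem _ _ (Submodule.subset_span (by simp)))
        | (rw [gen_ef1 q]
           exact sub_mem (Submodule.smul_mem _ _ (Submodule.subset_span (by simp)))
             (Submodule.smul_mem _ _ (Submodule.subset_span (by simp))))
        | (rw [gen_ef2 q]
           exact add_mem (Submodule.smul_mem _ _ (Submodule.subset_span (by simp)))
             (Submodule.smul_mem _ _ (Submodule.subset_span (by simp))))
        | (apply Submodule.subset_span; simp)
    · apply Submodule.span_le.2
      intro x hx
      simp only [Set.mem_insert_iff, Set.mem_singleton_iff] at hx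
      rcases hx with rfl | rfl | rfl <;>
        exact Submodule.subset_span ⟨f _, e _, by decide, rfl⟩
  refine ⟨hspan, ?_⟩
  rw [hspan]
  have hli : LinearIndependent ℂ ![gen q (f a1) * gen q (e a1),
      gen q (f a2) * gen q (e a2), gen q (f a12) * gen q (e a12)] := by
    apply LinearIndependent.of_comp (evalOne q)
    have heq : (evalOne q) ∘ ![gen q (f a1) * gen q (e a1),
        gen q (f a2) * gen q (e a2), gen q (f a12) * gen q (e a12)]
        = bw ∘ ![Bas.fe a1 a1, Bas.fe a2 a2, Bas.fe a12 a12] := by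
      funext i
      fin_cases i <;> simp
    rw [heq]
    exact bw.linearIndependent.comp _ (by decide)
  have hset : ({gen q (f a1) * gen q (e a1), gen q (f a2) * gen q (e a2),
      gen q (f a12) * gen q (e a12)} : Set (Lam q))
      = Set.range ![gen q (f a1) * gen q (e a1), gen q (f a2) * gen q (e a2),
        gen q (f a12) * gen q (e a12)] := by
    ext y
    simp only [Set.mem_insert_iff, Set.mem_singleton_iff, Set.mem_range]
    constructor
    · rintro (rfl | rfl | rfl)
      exacts [⟨0, rfl⟩, ⟨1, rfl⟩, ⟨2, rfl⟩]
    · rintro ⟨i, rfl⟩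
      fin_cases i <;> simp
  rw [hset, finrank_span_eq_card hli, Fintype.card_fin]


end QFlagExt
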